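/- Let 𝔲 be a finite-dimensional real nilpotent Lie algebra of nilpotency class at most 3. Then there exist a Lie algebra homomorphism φ : 𝔲 → gl(𝔲) with every φ_X nilpotent and a bijective linear map D : 𝔲 → 𝔲 satisfying D[X,Y] = φ_X(DY) − φ_Y(DX) for all X, Y ∈ 𝔲; that is, 𝔲 admits an étale affine representation on itself. -/

import Mathlib

attribute [local instance 100] LieRing.ofAssociativeRing

/-- **Scheuneman.**  Every finite-dimensional real nilpotent Lie algebra `𝔲` of
nilpotency class at most 3 admits an étale affine representation on itself: there are a
Lie algebra homomorphism `φ : 𝔲 → gl(𝔲)` with nilpotent values and a bijective linear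
map `D : 𝔲 → 𝔲` which is a derivation for `φ`. -/
theorem threeStep_nilpotent_lie_algebra_admits_etale_affine_representation
    {𝔲 : Type*} [LieRing 𝔲] [LieAlgebra ℝ 𝔲] [Module.Finite ℝ 𝔲]
    (h3 : ∀ X Y Z W : 𝔲, ⁅⁅⁅X, Y⁆, Z⁆, W⁆ = 0) :
    ∃ (φ : 𝔲 →ₗ⁅ℝ⁆ Module.End ℝ 𝔲) (D : 𝔲 →ₗ[ℝ] 𝔲),
      (∀ X : 𝔲, IsNilpotent (φ X)) ∧
      Function.Bijective D ∧
      (∀ X Y : 𝔲, D ⁅X, Y⁆ = φ X (D Y) - φ Y (D X)) := by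
  classical
  -- `S` is the span of all brackets.
  set S : Submodule ℝ 𝔲 := Submodule.span ℝ {z : 𝔲 | ∃ x y : 𝔲, ⁅x, y⁆ = z} with hSdef
  have hmem : ∀ x y : 𝔲, ⁅x, y⁆ ∈ S := fun x y => Submodule.subset_span ⟨x, y, rfl⟩
  -- brackets with first argument in `S` are central
  have hA : ∀ s ∈ S, ∀ u w : 𝔲, ⁅⁅s, u⁆, w⁆ = 0 := by
    intro s hs
    rw [hSdef] at hs
    induction hs using Submodule.span_induction with
    | mem z hz => obtain ⟨x, y, rfl⟩ := hz; exact fun u w => h3 x y u w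
    | zero => intro u w; simp
    | add a b _ _ ha hb => intro u w; rw [add_lie, add_lie, ha, hb, add_zero]
    | smul r a _ ha => intro u w; rw [smul_lie, smul_lie, ha, smul_zero]
  have hC : ∀ s ∈ S, ∀ u w : 𝔲, ⁅w, ⁅s, u⁆⁆ = 0 := by
    intro s hs u w
    rw [← lie_skew, hA s hs u w, neg_zero]
  -- `S` brackets to zero with itself
  have hB0 : ∀ (a b : 𝔲), ∀ t ∈ S, ⁅t, ⁅a, b⁆⁆ = 0 := by
    intro a b t ht
    rw [hSdef] at ht
    induction ht using Submodule.span_induction with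
    | mem z hz =>
        obtain ⟨x, y, rfl⟩ := hz
        rw [leibniz_lie, h3, zero_add, ← lie_skew, h3, neg_zero]
    | zero => simp
    | add c d _ _ hc hd => rw [add_lie, hc, hd, add_zero]
    | smul r c _ hc => rw [smul_lie, hc, smul_zero]
  have hB : ∀ s ∈ S, ∀ t ∈ S, ⁅t, s⁆ = 0 := by
    intro s hs
    rw [hSdef] at hs
    induction hs using Submodule.span_induction with
    | mem z hz => obtain ⟨x, y, rfl⟩ := hz; exact hB0 x y
    | zero => intro t ht; simp
    | add a b _ _ ha hb => intro t ht; rw [lie_add, ha t ht, hb t ht, add_zero]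
    | smul r a _ ha => intro t ht; rw [lie_smul, ha t ht, smul_zero]
  -- a linear projection onto `S`
  obtain ⟨Q, hQ⟩ := Submodule.exists_isCompl S
  set T : 𝔲 →ₗ[ℝ] 𝔲 := S.subtype ∘ₗ S.projectionOnto Q hQ with hTdef
  have hT1 : ∀ s ∈ S, T s = s := by
    intro s hs
    have h := Submodule.linearProjOfIsCompl_apply_left hQ (⟨s, hs⟩ : S)
    show S.subtype (S.projectionOnto Q hQ s) = s
    rw [show S.projectionOnto Q hQ s = S.projectionOnto Q hQ ((⟨s, hs⟩ : S) : 𝔲) from rfl,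
      h]
    rfl
  have hT2 : ∀ u : 𝔲, T u ∈ S := fun u => (S.projectionOnto Q hQ u).2
  -- the bilinear map φ
  set φ₀ : 𝔲 →ₗ[ℝ] 𝔲 →ₗ[ℝ] 𝔲 := LinearMap.mk₂ ℝ
    (fun X Y => (1/2 : ℝ) • ⁅X, Y⁆ - (1/6 : ℝ) • ⁅T X, Y⁆ - (1/6 : ℝ) • ⁅T Y, X⁆)
    (by intro m₁ m₂ n; simp only [add_lie, lie_add, map_add]; module)
    (by intro c m n; simp only [smul_lie, lie_smul, map_smul]; module)
    (by intro m n₁ n₂; simp only [add_lie, lie_add, map_add]; module)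
    (by intro c m n; simp only [smul_lie, lie_smul, map_smul]; module)
    with hφ₀def
  have hφ₀ : ∀ X Y : 𝔲, φ₀ X Y
      = (1/2 : ℝ) • ⁅X, Y⁆ - (1/6 : ℝ) • ⁅T X, Y⁆ - (1/6 : ℝ) • ⁅T Y, X⁆ := by
    intro X Y; rw [hφ₀def]; rfl
  -- φ applied to an element of S
  have hφS : ∀ X : 𝔲, ∀ s ∈ S, φ₀ X s = (2/3 : ℝ) • ⁅X, s⁆ := by
    intro X s hs
    rw [hφ₀, hB s hs (T X) (hT2 X), hT1 s hs, ← lie_skew s X]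
    rw [smul_zero, sub_zero, smul_neg, sub_neg_eq_add, ← add_smul]
    norm_num
  -- value of φ applied to a bracket image
  have hφφ : ∀ X Y Z : 𝔲, φ₀ X (φ₀ Y Z) = (1/3 : ℝ) • ⁅X, ⁅Y, Z⁆⁆ := by
    intro X Y Z
    have hYZ : φ₀ Y Z ∈ S := by
      rw [hφ₀]
      exact sub_mem (sub_mem (S.smul_mem _ (hmem _ _)) (S.smul_mem _ (hmem _ _)))
        (S.smul_mem _ (hmem _ _))
    rw [hφS X _ hYZ, hφ₀]
    rw [lie_sub, lie_sub, lie_smul, lie_smul, lie_smul]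
    rw [hC (T Y) (hT2 Y) Z X, hC (T Z) (hT2 Z) Y X]
    rw [smul_zero, sub_zero, sub_zero, smul_smul]
    norm_num
  -- the Lie algebra homomorphism
  have hmaplie : ∀ X Y : 𝔲, φ₀ ⁅X, Y⁆ = ⁅φ₀ X, φ₀ Y⁆ := by
    intro X Y
    apply LinearMap.ext
    intro Z
    rw [Ring.lie_def]
    simp only [LinearMap.sub_apply, Module.End.mul_apply]
    rw [hφφ X Y Z, hφφ Y X Z, hφ₀ ⁅X, Y⁆ Z, hT1 ⁅X, Y⁆ (hmem X Y),
      hB ⁅X, Y⁆ (hmem X Y) (T Z) (hT2 Z), smul_zero, sub_zero, leibniz_lie X Y Z]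
    module
  refine ⟨⟨φ₀, fun {X Y} => hmaplie X Y⟩, LinearMap.id, ?_, Function.bijective_id, ?_⟩
  · -- nilpotency
    intro X
    refine ⟨3, ?_⟩
    apply LinearMap.ext
    intro Z
    show φ₀ X (φ₀ X (φ₀ X Z)) = 0
    rw [hφφ X X Z, map_smul]
    have hb : ⁅X, ⁅X, Z⁆⁆ = -⁅⁅X, Z⁆, X⁆ := (lie_skew X ⁅X, Z⁆).symm
    rw [hb, map_neg, hφ₀, hC ⁅X, Z⁆ (hmem X Z) X X, hC ⁅X, Z⁆ (hmem X Z) X (T X),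
      hT1 ⁅⁅X, Z⁆, X⁆ (hmem ⁅X, Z⁆ X), hA ⁅X, Z⁆ (hmem X Z) X X]
    simp
  · intro X Y
    show ⁅X, Y⁆ = φ₀ X Y - φ₀ Y X
    rw [hφ₀, hφ₀, show ⁅Y, X⁆ = -⁅X, Y⁆ from (lie_skew Y X).symm]
    module
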